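/- Let k be a finite field with q elements and l|k a field extension of degree dividing q−1. For every character χ : Gal(l|k) → k^×, the eigenspace l(χ) = {x ∈ l : σ(x) = χ(σ)x for all σ ∈ Gal(l|k)} is a one-dimensional k-vector space. -/

import Mathlib

open Polynomial

/-- for a finite field `k` with `q` elements and an extension `l|k`
of degree dividing `q−1`, every eigenspace `l(χ) = {x ∈ l | σ x = χ(σ)·x ∀σ}`
for a character `χ : Gal(l|k) →* kˣ` is a one-dimensional `k`-vector space. -/
theorem stmt_8 (k l : Type) [Field k] [Fintype k] [Field l] [Algebra k l]
    [FiniteDimensional k l]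
    (hdeg : Module.finrank k l ∣ Fintype.card k - 1)
    (χ : (l ≃ₐ[k] l) →* kˣ) :
    Module.finrank k
      ↥(⨅ σ : l ≃ₐ[k] l, Module.End.eigenspace (σ.toLinearMap) ((χ σ : k))) = 1 := by
  classical
  haveI : Finite l := Module.finite_of_finite k
  haveI : Fintype l := Fintype.ofFinite l
  set q := Fintype.card k with hq
  set n := Module.finrank k l with hn
  have hq2 : 2 ≤ q := Fintype.one_lt_card
  have hnpos : 0 < n := Module.finrank_pos
  have hcardl : Fintype.card l = q ^ n := Module.card_eq_pow_finrank
  -- characteristic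
  obtain ⟨p, hp⟩ := CharP.exists k
  haveI := hp
  obtain ⟨m, hpprime, hqpm⟩ := FiniteField.card k p
  haveI : Fact p.Prime := ⟨hpprime⟩
  haveI : CharP l p := charP_of_injective_algebraMap (algebraMap k l).injective p
  haveI : ExpChar l p := ExpChar.prime hpprime
  -- the Frobenius of l over k
  let F : l →ₐ[k] l :=
    { toRingHom := iterateFrobenius l p m
      commutes' := fun x => by
        rw [RingHom.toMonoidHom_eq_coe, OneHom.toFun_eq_coe, MonoidHom.toOneHom_coe,
          MonoidHom.coe_coe, iterateFrobenius_def, ← map_pow, ← hqpm, FiniteField.pow_card] }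
  have hF : ∀ x : l, F x = x ^ q := fun x => by
    show iterateFrobenius l p m x = x ^ q
    rw [iterateFrobenius_def, ← hqpm, hq]
  let φ : l ≃ₐ[k] l :=
    AlgEquiv.ofBijective F ((Finite.injective_iff_bijective).1 F.toRingHom.injective)
  have hφ : ∀ x : l, φ x = x ^ q := hF
  -- powers of Frobenius
  have hφpow : ∀ (i : ℕ) (x : l), (φ ^ i) x = x ^ q ^ i := by
    intro i
    induction i with
    | zero => intro x; simp
    | succ i ih =>
      intro x
      rw [pow_succ, AlgEquiv.mul_apply, hφ, ih, ← pow_mul, ← pow_succ']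
  have hφn : φ ^ n = 1 := by
    apply AlgEquiv.ext
    intro x
    rw [hφpow, ← hcardl, FiniteField.pow_card, AlgEquiv.one_apply]
  -- the Galois group
  haveI : IsGalois k l := inferInstance
  have hcardG : Nat.card (l ≃ₐ[k] l) = n := by
    rw [IsGalois.card_aut_eq_finrank]
  -- a generator of lˣ
  obtain ⟨g, hg⟩ := IsCyclic.exists_generator (α := lˣ)
  have hog : orderOf g = q ^ n - 1 := by
    rw [orderOf_eq_card_of_forall_mem_zpowers hg, Nat.card_eq_fintype_card,
      Fintype.card_units, hcardl]
  -- order of Frobenius is n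
  have horder : orderOf φ = n := by
    have hdvd : orderOf φ ∣ n := by
      rw [← hcardG, Nat.card_eq_fintype_card]; exact orderOf_dvd_card
    refine Nat.dvd_antisymm hdvd ?_
    set d := orderOf φ with hd
    have hdpos : 0 < d := orderOf_pos φ
    have h1 : (g : l) ^ q ^ d = (g : l) := by
      rw [← hφpow, pow_orderOf_eq_one φ, AlgEquiv.one_apply]
    have h2 : g ^ (q ^ d - 1) = 1 := by
      have hqd : 1 ≤ q ^ d := Nat.one_le_pow _ _ (by omega)
      have : g ^ (q ^ d - 1) * g = g ^ (q ^ d) := by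
        rw [← pow_succ, Nat.sub_add_cancel hqd]
      have hgq : g ^ (q ^ d) = g := Units.ext (by
        rw [Units.val_pow_eq_pow_val]; exact h1)
      have := this.trans hgq
      exact mul_right_cancel (this.trans (one_mul g).symm)
    have h3 : q ^ n - 1 ∣ q ^ d - 1 := by
      rw [← hog]; exact orderOf_dvd_of_pow_eq_one h2
    have hqd2 : 2 ≤ q ^ d := by
      calc 2 = 2 ^ 1 := (pow_one 2).symm
      _ ≤ q ^ d := Nat.pow_le_pow_left hq2 1 |>.trans (Nat.pow_le_pow_right (by omega) hdpos)
    have h4 : q ^ n - 1 ≤ q ^ d - 1 := Nat.le_of_dvd (by omega) h3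
    have h5 : q ^ n ≤ q ^ d := by
      have : 1 ≤ q ^ n := Nat.one_le_pow _ _ (by omega)
      omega
    have h6 : n ≤ d := (Nat.pow_le_pow_iff_right (by omega)).1 h5
    have hdn : d = n := le_antisymm (Nat.le_of_dvd hnpos hdvd) h6
    rw [hdn]
  -- Frobenius generates the Galois group
  have hgen : ∀ σ : (l ≃ₐ[k] l), ∃ i : ℕ, φ ^ i = σ := by
    intro σ
    have htop : Subgroup.zpowers φ = ⊤ := by
      apply Subgroup.eq_top_of_card_eq
      rw [Nat.card_zpowers, horder, hcardG]
    have : σ ∈ Subgroup.zpowers φ := htop ▸ Subgroup.mem_top σ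
    exact mem_powers_iff_mem_zpowers.2 this
  -- the eigenvalue
  set a : k := ((χ φ : kˣ) : k) with ha
  set A : l := algebraMap k l a with hA
  have hEmem : ∀ x : l, x ∈ Module.End.eigenspace φ.toLinearMap a ↔ x ^ q = A * x := by
    intro x
    rw [Module.End.mem_eigenspace_iff, AlgEquiv.toLinearMap_apply, hφ, Algebra.smul_def]
  -- the infimum equals the eigenspace of the Frobenius
  have hinf : (⨅ σ : l ≃ₐ[k] l, Module.End.eigenspace (σ.toLinearMap) ((χ σ : k)))
      = Module.End.eigenspace φ.toLinearMap a := by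
    refine le_antisymm (iInf_le _ φ) (le_iInf fun σ => ?_)
    obtain ⟨i, rfl⟩ := hgen σ
    intro x hx
    rw [Module.End.mem_eigenspace_iff, AlgEquiv.toLinearMap_apply] at hx
    have key : ∀ j : ℕ, (φ ^ j) x = a ^ j • x := by
      intro j
      induction j with
      | zero => simp
      | succ j ih =>
        rw [pow_succ, AlgEquiv.mul_apply, hx, map_smul, ih, smul_smul, ← pow_succ']
    rw [Module.End.mem_eigenspace_iff, AlgEquiv.toLinearMap_apply, key i,
      map_pow, Units.val_pow_eq_pow_val]
  rw [hinf]
  set E := Module.End.eigenspace φ.toLinearMap a with hE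
  -- existence of a nonzero eigenvector
  set A' : lˣ := Units.map (algebraMap k l : k →* l) (χ φ) with hA'
  have hA'val : (A' : l) = A := rfl
  have hA'q1 : A' ^ (q - 1) = 1 := by
    rw [hA', ← map_pow]
    have h1 : (χ φ) ^ (Fintype.card kˣ) = 1 := pow_card_eq_one
    rw [Fintype.card_units, ← hq] at h1
    rw [h1, map_one]
  have hA'qi : ∀ i : ℕ, A' ^ q ^ i = A' := by
    intro i
    have hdvd : q - 1 ∣ q ^ i - 1 := by
      have := Nat.sub_dvd_pow_sub_pow q 1 i
      rwa [one_pow] at this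
    obtain ⟨c, hc⟩ := hdvd
    have hqi : 1 ≤ q ^ i := Nat.one_le_pow _ _ (by omega)
    calc A' ^ q ^ i = A' ^ (q ^ i - 1) * A' := by rw [← pow_succ, Nat.sub_add_cancel hqi]
    _ = A' := by rw [hc, pow_mul, hA'q1, one_pow, one_mul]
  have hA'n : A' ^ n = 1 := by
    rw [hA', ← map_pow, ← map_pow, hφn, map_one, map_one]
  set s : ℕ := ∑ i ∈ Finset.range n, q ^ i with hsdef
  have hs : (q - 1) * s = q ^ n - 1 := by
    have h1 : (1 : ℕ) ≤ q := by omega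
    have h2 : (1 : ℕ) ≤ q ^ n := Nat.one_le_pow _ _ (by omega)
    zify [h1, h2]
    rw [mul_comm]
    have := geom_sum_mul (q : ℤ) n
    rw [hsdef]
    push_cast
    exact this
  have hspos : 0 < s := by
    rw [hsdef]
    apply Finset.sum_pos (fun i _ => Nat.pow_pos (n := i) (by omega))
    exact ⟨0, Finset.mem_range.2 hnpos⟩
  have hA's : A' ^ s = 1 := by
    rw [hsdef, ← Finset.prod_pow_eq_pow_sum]
    calc (∏ i ∈ Finset.range n, A' ^ q ^ i) = ∏ _i ∈ Finset.range n, A' := by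
          exact Finset.prod_congr rfl fun i _ => hA'qi i
    _ = A' ^ n := by rw [Finset.prod_const, Finset.card_range]
    _ = 1 := hA'n
  obtain ⟨t, ht⟩ := Submonoid.mem_powers_iff A' g |>.1 (mem_powers_iff_mem_zpowers.2 (hg A'))
  have hts : g ^ (t * s) = 1 := by rw [pow_mul, ht, hA's]
  have hdvd : (q - 1) * s ∣ t * s := by
    rw [hs, ← hog]; exact orderOf_dvd_of_pow_eq_one hts
  have hq1t : q - 1 ∣ t := by
    have : s * (q - 1) ∣ s * t := by rwa [mul_comm s (q-1), mul_comm s t]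
    exact (Nat.mul_dvd_mul_iff_left hspos).1 this
  obtain ⟨c, rfl⟩ := hq1t
  set x₀ : l := ((g ^ c : lˣ) : l) with hx₀
  have hx₀ne : x₀ ≠ 0 := Units.ne_zero _
  have hx₀pow : x₀ ^ (q - 1) = A := by
    rw [hx₀, ← Units.val_pow_eq_pow_val, ← pow_mul, mul_comm c (q-1), ht, hA'val]
  have hx₀E : x₀ ∈ E := by
    rw [hE, hEmem]
    have : x₀ ^ q = x₀ ^ (q - 1) * x₀ := by
      rw [← pow_succ, Nat.sub_add_cancel (by omega)]
    rw [this, hx₀pow]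
  -- counting
  haveI : Fintype E := Fintype.ofFinite E
  have hlow : q ≤ Fintype.card E := by
    have hinj : Function.Injective (fun c : k => (⟨c • x₀, E.smul_mem c hx₀E⟩ : E)) := by
      intro c c' hcc
      have : c • x₀ = c' • x₀ := congrArg Subtype.val hcc
      exact smul_left_injective k hx₀ne this
    exact Fintype.card_le_of_injective _ hinj
  set P : Polynomial l := X ^ q - C A * X with hP
  have hCAX : (C A * X : l[X]).natDegree < (X ^ q : l[X]).natDegree := by
    have h1 : (C A * X : l[X]).natDegree ≤ 1 := by
      refine le_trans (natDegree_C_mul_le A X) ?_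
      rw [natDegree_X]
    rw [natDegree_X_pow]
    omega
  have hPdeg : P.natDegree = q := by
    rw [hP, natDegree_sub_eq_left_of_natDegree_lt hCAX, natDegree_X_pow]
  have hPne : P ≠ 0 := by
    intro h
    rw [h, natDegree_zero] at hPdeg
    omega
  have hroot : ∀ x : l, x ∈ E → x ∈ P.roots.toFinset := by
    intro x hx
    rw [hE, hEmem] at hx
    rw [Multiset.mem_toFinset, mem_roots hPne]
    show P.eval x = 0
    rw [hP]
    simp only [eval_sub, eval_mul, eval_pow, eval_X, eval_C]
    rw [hx, sub_self]
  have hhigh : Fintype.card E ≤ q := by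
    have hinj2 : Function.Injective
        (fun x : E => (⟨x.1, hroot x.1 x.2⟩ : {y // y ∈ P.roots.toFinset})) := by
      intro x y hxy
      have hv := congrArg (Subtype.val (p := fun y => y ∈ P.roots.toFinset)) hxy
      exact Subtype.ext hv
    calc Fintype.card E ≤ Fintype.card {y // y ∈ P.roots.toFinset} :=
          Fintype.card_le_of_injective _ hinj2
    _ = P.roots.toFinset.card := Fintype.card_coe _
    _ ≤ Multiset.card P.roots := Multiset.toFinset_card_le _
    _ ≤ P.natDegree := P.card_roots'
    _ = q := hPdeg
  have hcardE : Fintype.card E = q := le_antisymm hhigh hlow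
  have hpow : q ^ Module.finrank k ↥E = q ^ 1 := by
    rw [pow_one]
    have h := (Module.card_eq_pow_finrank (K := k) (V := ↥E)).symm
    rw [← hq, hcardE] at h
    exact h
  exact Nat.pow_right_injective hq2 hpow
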